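/- Let Q be a quadrature rule on the reference triangle T that is exact for degree ≤ d. Then there exists a constant C ≥ 0, depending only on Q and d, such that for every h > 0, every x_0 ∈ ℝ², and every f : ℝ² → ℝ of class C^{d+1} on an open set containing the scaled triangle x_0 + h·T, one has |∫_{x_0 + h·T} f dA − h² Σ_{i=1}^n w_i f(x_0 + h·x_i)| ≤ C · h^{d+3} · M, where M is the supremum over x_0 + h·T of the operator norm of the (d+1)-st derivative of f. -/

import Mathlib

open MeasureTheory
open scoped Nat

/-- The reference triangle: convex hull of (0,0), (1,0), (0,1). -/
noncomputable def refTriangle : Set (ℝ × ℝ) :=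
  convexHull ℝ ({(0, 0), (1, 0), (0, 1)} : Set (ℝ × ℝ))

/-- Evaluation of a bivariate polynomial at a point of ℝ². -/
noncomputable def evalP (p : MvPolynomial (Fin 2) ℝ) (q : ℝ × ℝ) : ℝ :=
  MvPolynomial.eval ![q.1, q.2] p

/-- Action of the quadrature rule with nodes `x` and weights `w`: Q(f) = ∑ wᵢ f(xᵢ). -/
noncomputable def quadApply {n : ℕ} (x : Fin n → ℝ × ℝ) (w : Fin n → ℝ)
    (f : ℝ × ℝ → ℝ) : ℝ :=
  ∑ i, w i * f (x i)

/-- Error functional of the quadrature rule: E_Q(f) = ∫_T f - Q(f). -/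
noncomputable def errQ {n : ℕ} (x : Fin n → ℝ × ℝ) (w : Fin n → ℝ)
    (f : ℝ × ℝ → ℝ) : ℝ :=
  (∫ q in refTriangle, f q) - quadApply x w f

/-- Exactness of the quadrature rule for all polynomials of total degree ≤ d. -/
def ExactDeg {n : ℕ} (x : Fin n → ℝ × ℝ) (w : Fin n → ℝ) (d : ℕ) : Prop :=
  ∀ p : MvPolynomial (Fin 2) ℝ, p.totalDegree ≤ d →
    (∫ q in refTriangle, evalP p q) = quadApply x w (evalP p)

section Aux

variable {E F : Type*} [NormedAddCommGroup E] [NormedSpace ℝ E]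
  [NormedAddCommGroup F] [NormedSpace ℝ F]

lemma my_fderiv_comp_const_add (g : E → F) (c x : E) :
    fderiv ℝ (fun y => g (c + y)) x = fderiv ℝ g (c + x) := by
  by_cases hg : DifferentiableAt ℝ g (c + x)
  · have h1 : HasFDerivAt (fun y : E => c + y) (ContinuousLinearMap.id ℝ E) x :=
      (hasFDerivAt_id x).const_add c
    have h2 : HasFDerivAt (fun y => g (c + y)) ((fderiv ℝ g (c + x)).comp
        (ContinuousLinearMap.id ℝ E)) x := hg.hasFDerivAt.comp x h1
    rw [h2.fderiv, ContinuousLinearMap.comp_id]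
  · have hg2 : ¬ DifferentiableAt ℝ (fun y => g (c + y)) x := by
      intro h
      apply hg
      have : DifferentiableAt ℝ (fun y => (fun z => g (c + z)) (y - c)) (c + x) :=
        (by simpa using h : DifferentiableAt ℝ (fun z => g (c+z)) (c + x - c)).comp (c + x)
          (g := fun z => g (c + z)) (f := fun y => y - c)
          ((differentiable_id.sub_const c).differentiableAt)
      · simpa using this
    rw [fderiv_zero_of_not_differentiableAt hg, fderiv_zero_of_not_differentiableAt hg2]

lemma my_iteratedFDeriv_comp_const_add (n : ℕ) (g : E → F) (c : E) :
    ∀ x : E, iteratedFDeriv ℝ n (fun y => g (c + y)) x = iteratedFDeriv ℝ n g (c + x) := by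
  induction n with
  | zero => intro x; ext m; simp [iteratedFDeriv_zero_apply]
  | succ n IH =>
    intro x
    ext m
    rw [iteratedFDeriv_succ_apply_left, iteratedFDeriv_succ_apply_left]
    have h1 : (fun y => iteratedFDeriv ℝ n (fun z => g (c + z)) y)
        = fun y => iteratedFDeriv ℝ n g (c + y) := funext IH
    rw [show fderiv ℝ (iteratedFDeriv ℝ n fun y => g (c + y)) x
        = fderiv ℝ (fun y => iteratedFDeriv ℝ n g (c + y)) x from by rw [← h1],
      my_fderiv_comp_const_add (iteratedFDeriv ℝ n g) c x]

lemma my_iteratedFDerivWithin_comp_const_add (n : ℕ) (g : E → F) (c : E) {U : Set E}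
    (hU : IsOpen U) {x : E} (hx : c + x ∈ U) :
    iteratedFDerivWithin ℝ n (fun y => g (c + y)) ((fun y => c + y) ⁻¹' U) x
      = iteratedFDerivWithin ℝ n g U (c + x) := by
  rw [iteratedFDerivWithin_of_isOpen n (hU.preimage (by continuity)) (by simpa using hx),
    iteratedFDerivWithin_of_isOpen n hU hx, my_iteratedFDeriv_comp_const_add]

lemma my_iFDW_mono (f : E → F) {s t : Set E} (hst : s ⊆ t) (ht : IsOpen t) {n N : ℕ}
    (hf : ContDiffOn ℝ N f t) (hn : n ≤ N) (hs : UniqueDiffOn ℝ s) {x : E} (hx : x ∈ s) :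
    iteratedFDerivWithin ℝ n f s x = iteratedFDerivWithin ℝ n f t x := by
  have hser : HasFTaylorSeriesUpToOn (N : ℕ∞) f (ftaylorSeriesWithin ℝ f t) t :=
    hf.ftaylorSeriesWithin ht.uniqueDiffOn
  have h1 := (hser.mono hst).eq_iteratedFDerivWithin_of_uniqueDiffOn
    (by exact_mod_cast hn) hs hx
  have h2 := hser.eq_iteratedFDerivWithin_of_uniqueDiffOn
    (by exact_mod_cast hn) ht.uniqueDiffOn (hst hx)
  rw [← h1, h2]

end Aux

lemma multilinear_diag_poly (k : ℕ) (m : ContinuousMultilinearMap ℝ (fun _ : Fin k => ℝ × ℝ) ℝ) :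
    ∃ p : MvPolynomial (Fin 2) ℝ, p.totalDegree ≤ k ∧ ∀ q : ℝ × ℝ, evalP p q = m (fun _ => q) := by
  classical
  set e : Fin 2 → ℝ × ℝ := ![(1, 0), (0, 1)] with he
  refine ⟨∑ r : Fin k → Fin 2, MvPolynomial.C (m (fun i => e (r i))) *
      ∏ i : Fin k, MvPolynomial.X (r i), ?_, ?_⟩
  · refine (MvPolynomial.totalDegree_finset_sum _ _).trans ?_
    apply Finset.sup_le
    intro r _
    refine (MvPolynomial.totalDegree_mul _ _).trans ?_
    rw [MvPolynomial.totalDegree_C, zero_add]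
    refine (MvPolynomial.totalDegree_finset_prod _ _).trans ?_
    simp [MvPolynomial.totalDegree_X]
  · intro q
    have hq : (q : ℝ × ℝ) = ∑ j : Fin 2, (![q.1, q.2] j) • e j := by
      simp [he, Fin.sum_univ_two, Prod.ext_iff]
    have expand : m (fun _ => q) = ∑ r : Fin k → Fin 2,
        (∏ i : Fin k, ![q.1, q.2] (r i)) • m (fun i => e (r i)) := by
      conv_lhs => rw [show (fun _ : Fin k => q) = fun _ : Fin k => ∑ j : Fin 2,
        (![q.1, q.2] j) • e j from funext fun _ => hq]
      rw [m.map_sum (g := fun _ j => (![q.1, q.2] j) • e j)]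
      refine Finset.sum_congr rfl fun r _ => ?_
      exact m.map_smul_univ (fun i => ![q.1, q.2] (r i)) (fun i => e (r i))
    rw [expand, evalP]
    simp only [map_sum, map_mul, MvPolynomial.eval_C, map_prod, MvPolynomial.eval_X]
    refine Finset.sum_congr rfl fun r _ => ?_
    rw [smul_eq_mul, mul_comm]

lemma refT_compact : IsCompact refTriangle :=
  (Set.toFinite _).isCompact_convexHull ℝ

lemma refT_convex : Convex ℝ refTriangle := convex_convexHull ℝ _

lemma refT_zero : (0 : ℝ × ℝ) ∈ refTriangle :=
  subset_convexHull ℝ _ (by left; rfl)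

lemma refT_norm_le {q : ℝ × ℝ} (hq : q ∈ refTriangle) : ‖q‖ ≤ 1 := by
  have : refTriangle ⊆ Metric.closedBall 0 1 := by
    apply convexHull_min _ (convex_closedBall _ _)
    intro p hp
    rcases hp with rfl | rfl | rfl <;>
      simp [Metric.mem_closedBall, Prod.norm_def, dist_eq_norm]
  simpa [Metric.mem_closedBall, dist_eq_norm] using this hq

lemma refT_measurable : MeasurableSet refTriangle :=
  refT_compact.isClosed.measurableSet

lemma scaled_integral {h : ℝ} (hh : 0 < h) (x₀ : ℝ × ℝ) (f : ℝ × ℝ → ℝ) :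
    ∫ q in (fun v => x₀ + h • v) '' refTriangle, f q
      = h ^ 2 * ∫ v in refTriangle, f (x₀ + h • v) := by
  have hder : ∀ v ∈ refTriangle, HasFDerivWithinAt (fun v : ℝ × ℝ => x₀ + h • v)
      (h • ContinuousLinearMap.id ℝ (ℝ × ℝ)) refTriangle v := fun v _ =>
    (((hasFDerivAt_id v).const_smul h).const_add x₀).hasFDerivWithinAt
  have hinj : Set.InjOn (fun v : ℝ × ℝ => x₀ + h • v) refTriangle := by
    intro a _ b _ hab
    simp only [add_right_inj] at hab
    exact smul_right_injective _ hh.ne' hab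
  rw [integral_image_eq_integral_abs_det_fderiv_smul volume refT_measurable hder hinj f]
  have hdet : (h • ContinuousLinearMap.id ℝ (ℝ × ℝ)).det = h ^ 2 := by
    simp only [ContinuousLinearMap.det]
    rw [ContinuousLinearMap.coe_smul, ContinuousLinearMap.coe_id, LinearMap.det_smul,
      LinearMap.det_id, mul_one]
    norm_num
  simp only [hdet, abs_of_nonneg (pow_nonneg hh.le 2), smul_eq_mul]
  rw [MeasureTheory.integral_const_mul]

/-- scaled single-element error bound. There is C ≥ 0 depending only on the
rule and d such that for every h > 0, x₀ and f of class C^{d+1} on an open set containing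
x₀ + h·T, the quadrature error on x₀ + h·T is at most C · h^{d+3} · M, where M is the sup
over x₀ + h·T of the operator norm of the (d+1)-st derivative of f. -/
theorem scaled_triangle_error_bound {n d : ℕ}
    (x : Fin n → ℝ × ℝ) (w : Fin n → ℝ)
    (hx : ∀ i, x i ∈ refTriangle) (hexact : ExactDeg x w d) :
    ∃ C : ℝ, 0 ≤ C ∧
      ∀ (h : ℝ), 0 < h → ∀ (x₀ : ℝ × ℝ) (f : ℝ × ℝ → ℝ) (U : Set (ℝ × ℝ)),
        IsOpen U → (fun v => x₀ + h • v) '' refTriangle ⊆ U →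
        ContDiffOn ℝ (d + 1) f U →
        |(∫ q in (fun v => x₀ + h • v) '' refTriangle, f q) -
            h ^ 2 * ∑ i, w i * f (x₀ + h • x i)| ≤
          C * h ^ (d + 3) *
            ⨆ q ∈ (fun v => x₀ + h • v) '' refTriangle,
              ‖iteratedFDerivWithin ℝ (d + 1) f U q‖ := by
  classical
  set V : ℝ := (volume refTriangle).toReal with hV
  set W : ℝ := ∑ i, |w i| with hW
  have hV0 : 0 ≤ V := ENNReal.toReal_nonneg
  have hW0 : 0 ≤ W := Finset.sum_nonneg fun i _ => abs_nonneg _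
  refine ⟨(V + W) / (d ! : ℝ), by positivity, ?_⟩
  intro h hh x₀ f U hU hsub hf
  set A : (ℝ × ℝ) → ℝ × ℝ := fun v => x₀ + h • v with hA
  set s : Set (ℝ × ℝ) := A ⁻¹' U with hsdef
  have hs_open : IsOpen s := hU.preimage (by fun_prop)
  have hKs : refTriangle ⊆ s := fun v hv => hsub ⟨v, hv, rfl⟩
  set g : (ℝ × ℝ) → ℝ := fun v => f (x₀ + h • v) with hgdef
  have hg : ContDiffOn ℝ (d + 1) g s := by
    have hA' : ContDiffOn ℝ (d + 1) A s :=
      (contDiff_const.add (contDiff_id.const_smul h)).contDiffOn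
    exact hf.comp hA' (fun v hv => hv)
  set M : ℝ := ⨆ q ∈ (fun v => x₀ + h • v) '' refTriangle,
      ‖iteratedFDerivWithin ℝ (d + 1) f U q‖ with hM
  have hM0 : 0 ≤ M := Real.iSup_nonneg fun q => Real.iSup_nonneg fun _ => norm_nonneg _
  -- the sup bounds pointwise values
  have hMb : ∀ v ∈ refTriangle, ‖iteratedFDerivWithin ℝ (d + 1) f U (A v)‖ ≤ M := by
    have hScomp : IsCompact ((fun v => x₀ + h • v) '' refTriangle) :=
      refT_compact.image (by fun_prop)
    have hSU : (fun v => x₀ + h • v) '' refTriangle ⊆ U := hsub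
    have hcont : ContinuousOn (iteratedFDerivWithin ℝ (d + 1) f U)
        ((fun v => x₀ + h • v) '' refTriangle) :=
      (hf.continuousOn_iteratedFDerivWithin (by exact_mod_cast le_rfl)
        hU.uniqueDiffOn).mono hSU
    obtain ⟨R, hR⟩ := hScomp.exists_bound_of_continuousOn hcont
    have hbdd : BddAbove (Set.range fun q => ⨆ _ : q ∈ (fun v => x₀ + h • v) '' refTriangle,
        ‖iteratedFDerivWithin ℝ (d + 1) f U q‖) := by
      refine ⟨max R 0, ?_⟩
      rintro _ ⟨q, rfl⟩
      exact Real.iSup_le (fun hq => le_max_of_le_left (hR q hq)) (le_max_right _ _)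
    intro v hv
    have hmem : A v ∈ (fun v => x₀ + h • v) '' refTriangle := ⟨v, hv, rfl⟩
    have := le_ciSup hbdd (A v)
    rwa [ciSup_pos hmem] at this
  -- chain rule bound on derivatives of g
  have hchain : ∀ v ∈ s, iteratedFDerivWithin ℝ (d + 1) g s v =
      (iteratedFDerivWithin ℝ (d + 1) f U (A v)).compContinuousLinearMap
        (fun _ => h • ContinuousLinearMap.id ℝ (ℝ × ℝ)) := by
    intro v hv
    set B : (ℝ × ℝ) →L[ℝ] ℝ × ℝ := h • ContinuousLinearMap.id ℝ (ℝ × ℝ) with hB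
    set f₂ : (ℝ × ℝ) → ℝ := fun y => f (x₀ + y) with hf₂
    set U₂ : Set (ℝ × ℝ) := (fun y => x₀ + y) ⁻¹' U with hU₂
    have hU₂open : IsOpen U₂ := hU.preimage (by fun_prop)
    have hf₂' : ContDiffOn ℝ (d + 1) f₂ U₂ :=
      hf.comp ((contDiff_const.add contDiff_id).contDiffOn) (fun y hy => hy)
    have hsB : s = B ⁻¹' U₂ := by
      ext u
      simp [hsdef, hU₂, hB, hA]
    have hBv : B v = h • v := by simp [hB]
    have hBU₂ : B v ∈ U₂ := by
      rw [hBv]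
      simpa [hU₂, hA, hsdef] using hv
    have hcomp := B.iteratedFDerivWithin_comp_right hf₂' hU₂open.uniqueDiffOn
      (hsB ▸ hs_open).uniqueDiffOn hBU₂ (i := d + 1) (by exact_mod_cast le_rfl)
    have hgB : g = f₂ ∘ B := by
      funext u
      simp [hgdef, hf₂, hB]
    rw [hgB, hsB]
    rw [hcomp]
    congr 1
    rw [show (⇑B) v = h • v from hBv]
    have := my_iteratedFDerivWithin_comp_const_add (d + 1) f x₀ hU
      (x := h • v) (by simpa [hA, hsdef] using hv)
    rw [show (fun y => x₀ + y) ⁻¹' U = U₂ from rfl] at this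
    rw [show f₂ = fun y => f (x₀ + y) from rfl]
    rw [this]
  have hDg : ∀ v ∈ refTriangle, ‖iteratedFDerivWithin ℝ (d + 1) g s v‖ ≤ h ^ (d + 1) * M := by
    intro v hv
    rw [hchain v (hKs hv)]
    refine (ContinuousMultilinearMap.norm_compContinuousLinearMap_le _ _).trans ?_
    have hBnorm : ‖h • ContinuousLinearMap.id ℝ (ℝ × ℝ)‖ ≤ h := by
      have h1 := norm_smul h (ContinuousLinearMap.id ℝ (ℝ × ℝ))
      rw [h1, Real.norm_eq_abs, abs_of_pos hh]
      calc h * ‖ContinuousLinearMap.id ℝ (ℝ × ℝ)‖ ≤ h * 1 :=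
        mul_le_mul_of_nonneg_left ContinuousLinearMap.norm_id_le hh.le
      _ = h := mul_one h
    calc ‖iteratedFDerivWithin ℝ (d + 1) f U (A v)‖ *
          ∏ _i : Fin (d + 1), ‖h • ContinuousLinearMap.id ℝ (ℝ × ℝ)‖
        ≤ M * ∏ _i : Fin (d + 1), h := by
          refine mul_le_mul (hMb v hv) ?_ (Finset.prod_nonneg fun _ _ => norm_nonneg _) hM0
          exact Finset.prod_le_prod (fun _ _ => norm_nonneg _) (fun _ _ => hBnorm)
      _ = h ^ (d + 1) * M := by
          rw [Finset.prod_const, Finset.card_univ, Fintype.card_fin, mul_comm]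
  -- Taylor polynomial of g at 0
  set P : (ℝ × ℝ) → ℝ := fun q => ∑ k ∈ Finset.range (d + 1),
      ((k ! : ℝ)⁻¹) * (iteratedFDerivWithin ℝ k g s 0 (fun _ => q)) with hP
  -- derivative identification along segments
  have key : ∀ q ∈ refTriangle, ∀ k, k ≤ d + 1 → ∀ t ∈ Set.Icc (0 : ℝ) 1,
      iteratedDerivWithin k (fun t : ℝ => g (t • q)) (Set.Icc 0 1) t
        = iteratedFDerivWithin ℝ k g s (t • q) (fun _ => q) := by
    intro q hq k hk t ht
    set L : ℝ →L[ℝ] ℝ × ℝ := ContinuousLinearMap.toSpanSingleton ℝ q with hL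
    have hLapp : ∀ u : ℝ, L u = u • q := fun u => ContinuousLinearMap.toSpanSingleton_apply ℝ q u
    have hψeq : (fun t : ℝ => g (t • q)) = g ∘ L := by
      funext u; simp [hLapp u]
    have hO : IsOpen (L ⁻¹' s) := hs_open.preimage L.continuous
    have hIcc : Set.Icc (0 : ℝ) 1 ⊆ L ⁻¹' s := by
      intro u hu
      have : u • q ∈ refTriangle := refT_convex.smul_mem_of_zero_mem refT_zero hq hu
      simpa [Set.mem_preimage, hLapp u] using hKs this
    have hψ : ContDiffOn ℝ (d + 1) (g ∘ L) (L ⁻¹' s) :=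
      hg.comp L.contDiff.contDiffOn (fun u hu => hu)
    have hLt : L t ∈ s := hIcc ht
    rw [hψeq, iteratedDerivWithin_eq_iteratedFDerivWithin,
      my_iFDW_mono (g ∘ L) hIcc hO hψ hk (uniqueDiffOn_Icc zero_lt_one) ht,
      L.iteratedFDerivWithin_comp_right hg hs_open.uniqueDiffOn hO.uniqueDiffOn hLt
        (by exact_mod_cast hk)]
    rw [show (⇑L) t = t • q from hLapp t]
    simp [ContinuousMultilinearMap.compContinuousLinearMap_apply, hLapp 1]
  -- Taylor remainder bound
  have htaylor : ∀ q ∈ refTriangle, |g q - P q| ≤ h ^ (d + 1) * M / d ! := by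
    intro q hq
    set ψ : ℝ → ℝ := fun t => g (t • q) with hψdef
    have hψI : ContDiffOn ℝ (d + 1) ψ (Set.Icc 0 1) := by
      have hLapp : ∀ u : ℝ, (ContinuousLinearMap.toSpanSingleton ℝ q) u = u • q :=
        fun u => ContinuousLinearMap.toSpanSingleton_apply ℝ q u
      have hψeq : ψ = g ∘ (ContinuousLinearMap.toSpanSingleton ℝ q) := by
        funext u; simp [hψdef, hLapp u]
      have hIcc : Set.Icc (0 : ℝ) 1 ⊆ (ContinuousLinearMap.toSpanSingleton ℝ q) ⁻¹' s := by
        intro u hu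
        have : u • q ∈ refTriangle := refT_convex.smul_mem_of_zero_mem refT_zero hq hu
        simpa [Set.mem_preimage, hLapp u] using hKs this
      rw [hψeq]
      exact (hg.comp (ContinuousLinearMap.toSpanSingleton ℝ q).contDiff.contDiffOn
        (fun u hu => hu)).mono hIcc
    have hC : ∀ y ∈ Set.Icc (0 : ℝ) 1,
        ‖iteratedDerivWithin (d + 1) ψ (Set.Icc 0 1) y‖ ≤ h ^ (d + 1) * M := by
      intro y hy
      rw [key q hq (d + 1) le_rfl y hy]
      have hyq : y • q ∈ refTriangle := refT_convex.smul_mem_of_zero_mem refT_zero hq hy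
      calc ‖iteratedFDerivWithin ℝ (d + 1) g s (y • q) (fun _ => q)‖
          ≤ ‖iteratedFDerivWithin ℝ (d + 1) g s (y • q)‖ * ∏ _i : Fin (d + 1), ‖q‖ :=
            ContinuousMultilinearMap.le_opNorm _ _
        _ ≤ (h ^ (d + 1) * M) * 1 := by
            refine mul_le_mul (hDg _ hyq) ?_ (Finset.prod_nonneg fun _ _ => norm_nonneg _)
              (by positivity)
            rw [Finset.prod_const, Finset.card_univ, Fintype.card_fin]
            exact pow_le_one₀ (norm_nonneg q) (refT_norm_le hq)
        _ = h ^ (d + 1) * M := mul_one _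
    have hbound := taylor_mean_remainder_bound (n := d) zero_le_one hψI
      (Set.right_mem_Icc.2 zero_le_one) hC
    have hTP : taylorWithinEval ψ d (Set.Icc 0 1) 0 1 = P q := by
      rw [taylor_within_apply]
      rw [hP]
      refine Finset.sum_congr rfl fun k hk => ?_
      have hkd : k ≤ d + 1 := by
        have := Finset.mem_range.1 hk; omega
      have hkey := key q hq k hkd 0 (Set.left_mem_Icc.2 zero_le_one)
      rw [show (fun t : ℝ => g (t • q)) = ψ from rfl] at hkey
      rw [hkey, zero_smul]
      simp [smul_eq_mul]
    have hψ1 : ψ 1 = g q := by simp [hψdef]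
    rw [hTP, hψ1] at hbound
    have : |g q - P q| ≤ h ^ (d + 1) * M * (1 - 0) ^ (d + 1) / d ! := by
      simpa [Real.norm_eq_abs] using hbound
    simpa using this
  -- P agrees with a polynomial of total degree ≤ d
  have hpoly : ∀ k : ℕ, ∃ p : MvPolynomial (Fin 2) ℝ, p.totalDegree ≤ k ∧
      ∀ q : ℝ × ℝ, evalP p q = iteratedFDerivWithin ℝ k g s 0 (fun _ => q) :=
    fun k => multilinear_diag_poly k _
  choose pk hdegk hvalk using hpoly
  set p : MvPolynomial (Fin 2) ℝ :=
    ∑ k ∈ Finset.range (d + 1), MvPolynomial.C ((k ! : ℝ)⁻¹) * pk k with hpdef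
  have hdegp : p.totalDegree ≤ d := by
    refine (MvPolynomial.totalDegree_finset_sum _ _).trans (Finset.sup_le fun k hk => ?_)
    refine (MvPolynomial.totalDegree_mul _ _).trans ?_
    rw [MvPolynomial.totalDegree_C, zero_add]
    exact (hdegk k).trans (by have := Finset.mem_range.1 hk; omega)
  have hpq : ∀ q : ℝ × ℝ, evalP p q = P q := by
    intro q
    rw [hP, hpdef, evalP]
    simp only [map_sum, map_mul, MvPolynomial.eval_C]
    exact Finset.sum_congr rfl fun k _ => by rw [← hvalk k q, evalP]
  -- exactness gives vanishing of error on P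
  have hEP : (∫ q in refTriangle, P q) = ∑ i, w i * P (x i) := by
    have := hexact p hdegp
    rw [quadApply] at this
    simpa [funext hpq] using this
  -- integrability
  have hgInt : IntegrableOn g refTriangle := by
    exact (hg.continuousOn.mono hKs).integrableOn_compact refT_compact
  have hPcont : Continuous P := by
    apply continuous_finset_sum
    intro k _
    refine Continuous.mul continuous_const ?_
    exact (iteratedFDerivWithin ℝ k g s 0).cont.comp
      (continuous_pi fun _ => continuous_id)
  have hPInt : IntegrableOn P refTriangle :=
    hPcont.continuousOn.integrableOn_compact refT_compact
  -- core estimate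
  set B : ℝ := h ^ (d + 1) * M / d ! with hBdef
  have hB0 : 0 ≤ B := by positivity
  have hsplit : (∫ q in refTriangle, g q) - ∑ i, w i * g (x i)
      = (∫ q in refTriangle, (g q - P q)) - ∑ i, w i * (g (x i) - P (x i)) := by
    rw [integral_sub hgInt hPInt]
    have : ∑ i, w i * (g (x i) - P (x i))
        = (∑ i, w i * g (x i)) - ∑ i, w i * P (x i) := by
      rw [← Finset.sum_sub_distrib]
      exact Finset.sum_congr rfl fun i _ => by ring
    rw [this, hEP]
    ring
  have hcore : |(∫ q in refTriangle, g q) - ∑ i, w i * g (x i)| ≤ (V + W) * B := by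
    rw [hsplit]
    have h1 : |∫ q in refTriangle, (g q - P q)| ≤ B * V := by
      have := norm_setIntegral_le_of_norm_le_const (C := B) (f := fun q => g q - P q) (μ := volume)
        (refT_compact.measure_lt_top)
        (fun q hq => by simpa [Real.norm_eq_abs] using htaylor q hq)
      simpa [Real.norm_eq_abs, hV, measureReal_def] using this
    have h2 : |∑ i, w i * (g (x i) - P (x i))| ≤ W * B := by
      refine (Finset.abs_sum_le_sum_abs _ _).trans ?_
      rw [hW, Finset.sum_mul]
      refine Finset.sum_le_sum fun i _ => ?_
      rw [abs_mul]
      exact mul_le_mul_of_nonneg_left (htaylor (x i) (hx i)) (abs_nonneg _)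
    calc |(∫ q in refTriangle, (g q - P q)) - ∑ i, w i * (g (x i) - P (x i))|
        ≤ |∫ q in refTriangle, (g q - P q)| + |∑ i, w i * (g (x i) - P (x i))| := by
          simpa [sub_eq_add_neg, abs_neg] using
            abs_add_le (∫ q in refTriangle, (g q - P q)) (-(∑ i, w i * (g (x i) - P (x i))))
      _ ≤ B * V + W * B := add_le_add h1 h2
      _ = (V + W) * B := by ring
  -- assemble
  rw [scaled_integral hh x₀ f]
  have hLHS : |h ^ 2 * (∫ v in refTriangle, f (x₀ + h • v)) - h ^ 2 * ∑ i, w i * f (x₀ + h • x i)|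
      = h ^ 2 * |(∫ q in refTriangle, g q) - ∑ i, w i * g (x i)| := by
    rw [← mul_sub, abs_mul, abs_of_nonneg (by positivity : (0:ℝ) ≤ h ^ 2)]
  rw [hLHS]
  calc h ^ 2 * |(∫ q in refTriangle, g q) - ∑ i, w i * g (x i)|
      ≤ h ^ 2 * ((V + W) * B) := by
        exact mul_le_mul_of_nonneg_left hcore (by positivity)
    _ = (V + W) / d ! * h ^ (d + 3) * M := by
        rw [hBdef, show d + 3 = (d + 1) + 2 from by omega, pow_add]
        field_simp
        ring
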